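/- (Generalized Catalan recurrence, Hilton–Pedersen) For integers q ≥ 0 and n ≥ 1, the generalized Catalan numbers C_n^q = (1/(qn+1)) · binom((q+1)n, n) satisfy C_n^q = Σ Π_{i=1}^{q+1} C_{n_i}^q, where the sum runs over all (q+1)-tuples (n_1, …, n_{q+1}) of nonnegative integers with n_1 + ⋯ + n_{q+1} = n − 1, and C_0^q = 1. -/

import Mathlib

/-- The generalized Catalan number `C_n^q = (1/(qn+1)) · C((q+1)n, n)`. -/
def genCatalan (q n : ℕ) : ℚ :=
  1 / (q * n + 1) * Nat.choose ((q + 1) * n) n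

/-- Fuss–Catalan style numbers: `D p r n = r/(pn+r) · C(pn+r, n)`, the coefficient of
`x^n` in `B(x)^r` where `B = 1 + x·B^p`. -/
def fcD (p r n : ℕ) : ℚ :=
  if n = 0 then 1 else (r : ℚ) / (p * n + r) * ((p * n + r).choose n)

lemma fcD_zero (p r : ℕ) : fcD p r 0 = 1 := rfl

lemma fcD_eq (p r n : ℕ) (h : 1 ≤ p * n + r) :
    fcD p r n = (r : ℚ) / ((p * n + r : ℕ) : ℚ) * ((p * n + r).choose n) := by
  rcases Nat.eq_zero_or_pos n with hn | hn
  · subst hn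
    have hr : 1 ≤ r := by simpa using h
    have hr' : (r : ℚ) ≠ 0 := by exact_mod_cast Nat.one_le_iff_ne_zero.mp hr
    simp [fcD, div_self, hr']
  · simp only [fcD, Nat.one_le_iff_ne_zero.mp hn, if_false]
    push_cast
    ring

lemma fcD_zero_left (p n : ℕ) (hn : 1 ≤ n) : fcD p 0 n = 0 := by
  simp [fcD, Nat.one_le_iff_ne_zero.mp hn]

/-- The key recurrence, coming from `B^(r+1) = B^r + x·B^(p+r)`. -/
lemma fcD_rec (p r n : ℕ) (hp : 1 ≤ p) :
    fcD p (r + 1) (n + 1) = fcD p r (n + 1) + fcD p (p + r) n := by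
  obtain ⟨M, hMdef⟩ : ∃ M, p * (n + 1) + r = M := ⟨_, rfl⟩
  have hM : 1 ≤ M := by nlinarith
  have h1 : fcD p (r + 1) (n + 1)
      = ((r : ℚ) + 1) / ((M : ℚ) + 1) * (((M + 1).choose (n + 1) : ℕ) : ℚ) := by
    rw [fcD_eq _ _ _ (by omega), show p * (n + 1) + (r + 1) = M + 1 by omega]
    push_cast; ring
  have h2 : fcD p r (n + 1) = (r : ℚ) / M * ((M.choose (n + 1) : ℕ) : ℚ) := by
    rw [fcD_eq _ _ _ (by omega), hMdef]
  have h3 : fcD p (p + r) n = ((p : ℚ) + r) / M * ((M.choose n : ℕ) : ℚ) := by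
    rw [fcD_eq _ _ _ (by omega), show p * n + (p + r) = M by rw [← hMdef]; ring]
    push_cast; ring
  rw [h1, h2, h3]
  have hnM : n + 1 ≤ M := by nlinarith
  have c1 : (((M + 1).choose (n + 1) : ℕ) : ℚ) * ((n : ℚ) + 1)
      = ((M : ℚ) + 1) * ((M.choose n : ℕ) : ℚ) := by
    have := Nat.add_one_mul_choose_eq M n
    exact_mod_cast (congrArg (Nat.cast : ℕ → ℚ) this).symm
  have c2 : ((M.choose (n + 1) : ℕ) : ℚ) * ((n : ℚ) + 1)
      = ((M.choose n : ℕ) : ℚ) * ((M : ℚ) - n) := by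
    have h' : ((M.choose (n + 1) * (n + 1) : ℕ) : ℚ) = ((M.choose n * (M - n) : ℕ) : ℚ) :=
      congrArg _ (Nat.choose_succ_right_eq M n)
    push_cast [Nat.cast_sub (by omega : n ≤ M)] at h'
    linarith [h']
  have hM0 : (M : ℚ) ≠ 0 := by exact_mod_cast Nat.one_le_iff_ne_zero.mp hM
  have hM1 : (M : ℚ) + 1 ≠ 0 := by positivity
  have hn1 : (n : ℚ) + 1 ≠ 0 := by positivity
  have hMval : (M : ℚ) = (p : ℚ) * ((n : ℚ) + 1) + r := by
    rw [← hMdef]; push_cast; ring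
  set A : ℚ := ((M.choose n : ℕ) : ℚ)
  set B : ℚ := ((M.choose (n + 1) : ℕ) : ℚ)
  set E : ℚ := (((M + 1).choose (n + 1) : ℕ) : ℚ)
  have hE : E = ((M : ℚ) + 1) * A / ((n : ℚ) + 1) := by
    field_simp; linarith [c1]
  have hB : B = A * ((M : ℚ) - n) / ((n : ℚ) + 1) := by
    field_simp; linarith [c2]
  rw [hE, hB, hMval]
  field_simp
  ring

/-- Vandermonde-type convolution for `fcD`. -/
lemma fcD_conv (p : ℕ) (hp : 1 ≤ p) :
    ∀ n r s : ℕ, ∑ ij ∈ Finset.HasAntidiagonal.antidiagonal n, fcD p r ij.1 * fcD p s ij.2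
      = fcD p (r + s) n := by
  intro n
  induction n with
  | zero => intro r s; simp [fcD_zero]
  | succ n ihn =>
    intro r s
    induction r with
    | zero =>
      rw [Finset.Nat.sum_antidiagonal_succ]
      dsimp only
      have h0 : ∀ ij ∈ Finset.HasAntidiagonal.antidiagonal n,
          fcD p 0 (ij.1 + 1) * fcD p s ij.2 = 0 := by
        intro ij _
        rw [fcD_zero_left p _ (Nat.succ_le_succ (Nat.zero_le _))]
        ring
      rw [Finset.sum_congr rfl h0]
      simp [fcD_zero]
    | succ r ihr =>
      rw [Finset.Nat.sum_antidiagonal_succ] at ihr ⊢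
      dsimp only at ihr ⊢
      have step : ∀ ij ∈ Finset.HasAntidiagonal.antidiagonal n,
          fcD p (r + 1) (ij.1 + 1) * fcD p s ij.2
            = fcD p r (ij.1 + 1) * fcD p s ij.2 + fcD p (p + r) ij.1 * fcD p s ij.2 := by
        intro ij _
        rw [fcD_rec p r ij.1 hp]
        ring
      rw [Finset.sum_congr rfl step, Finset.sum_add_distrib, ihn (p + r) s]
      have hrec := fcD_rec p (r + s) n hp
      rw [fcD_zero] at ihr ⊢
      rw [show r + 1 + s = r + s + 1 by omega,
          show p + r + s = p + (r + s) by omega]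
      linarith [ihr, hrec]

/-- Splitting a sum over `(k+1)`-tuples with given total into head and tail. -/
lemma sum_antidiagonalTuple_succ {M : Type*} [AddCommMonoid M] (k n : ℕ)
    (g : (Fin (k + 1) → ℕ) → M) :
    ∑ f ∈ Finset.Nat.antidiagonalTuple (k + 1) n, g f
      = ∑ ij ∈ Finset.HasAntidiagonal.antidiagonal n,
          ∑ t ∈ Finset.Nat.antidiagonalTuple k ij.2, g (Fin.cons ij.1 t) := by
  rw [← Finset.sum_sigma (Finset.HasAntidiagonal.antidiagonal n)
      (fun ij => Finset.Nat.antidiagonalTuple k ij.2)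
      (fun x => g (Fin.cons x.1.1 x.2))]
  refine Finset.sum_bij'
    (fun f _ => (⟨(f 0, ∑ i : Fin k, f i.succ), Fin.tail f⟩ :
      Σ ij : ℕ × ℕ, (Fin k → ℕ)))
    (fun x _ => Fin.cons x.1.1 x.2) ?_ ?_ ?_ ?_ ?_
  · intro f hf
    rw [Finset.Nat.mem_antidiagonalTuple] at hf
    refine Finset.mem_sigma.mpr ⟨?_, ?_⟩
    · dsimp only
      rw [Finset.HasAntidiagonal.mem_antidiagonal, ← hf, Fin.sum_univ_succ]
    · dsimp only
      rw [Finset.Nat.mem_antidiagonalTuple]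
      rfl
  · intro x hx
    rw [Finset.mem_sigma] at hx
    obtain ⟨h1, h2⟩ := hx
    rw [Finset.HasAntidiagonal.mem_antidiagonal] at h1
    rw [Finset.Nat.mem_antidiagonalTuple] at h2 ⊢
    rw [Fin.sum_univ_succ]
    simp [h2, h1]
  · intro f hf
    simp [Fin.cons_self_tail]
  · intro x hx
    rw [Finset.mem_sigma] at hx
    obtain ⟨-, h2⟩ := hx
    rw [Finset.Nat.mem_antidiagonalTuple] at h2
    simp [Fin.tail_cons, h2]
  · intro f hf
    simp [Fin.cons_self_tail]

lemma fcD_tuple (p : ℕ) (hp : 1 ≤ p) :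
    ∀ k n : ℕ, ∑ f ∈ Finset.Nat.antidiagonalTuple k n, ∏ i, fcD p 1 (f i) = fcD p k n := by
  intro k
  induction k with
  | zero =>
    intro n
    match n with
    | 0 => simp [fcD_zero]
    | n + 1 => simp [fcD_zero_left p (n + 1) (Nat.succ_le_succ (Nat.zero_le _))]
  | succ k ihk =>
    intro n
    rw [sum_antidiagonalTuple_succ]
    have : ∀ ij ∈ Finset.HasAntidiagonal.antidiagonal n,
        ∑ t ∈ Finset.Nat.antidiagonalTuple k ij.2, ∏ i, fcD p 1 ((Fin.cons ij.1 t : Fin (k + 1) → ℕ) i)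
          = fcD p 1 ij.1 * fcD p k ij.2 := by
      intro ij _
      rw [← ihk ij.2, Finset.mul_sum]
      refine Finset.sum_congr rfl fun t _ => ?_
      rw [Fin.prod_univ_succ]
      simp [Fin.cons_zero, Fin.cons_succ]
    rw [Finset.sum_congr rfl this, fcD_conv p hp n 1 k, Nat.add_comm 1 k]

lemma genCatalan_eq_fcD (q n : ℕ) : genCatalan q n = fcD (q + 1) 1 n := by
  rcases Nat.eq_zero_or_pos n with hn | hn
  · subst hn; simp [genCatalan, fcD_zero]
  · rw [fcD_eq _ _ _ (by omega)]
    unfold genCatalan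
    have key : (q + 1) * n = q * n + n := by ring
    have h1 : (q + 1) * n + 1 - n = q * n + 1 := by omega
    have h2 : (q + 1) * n - n = q * n := by omega
    rw [Nat.cast_choose ℚ (show n ≤ (q + 1) * n + 1 by omega),
        Nat.cast_choose ℚ (show n ≤ (q + 1) * n by omega), h1, h2]
    have e1 : ((q + 1) * n + 1).factorial = ((q + 1) * n + 1) * ((q + 1) * n).factorial :=
      Nat.factorial_succ _
    have e2 : (q * n + 1).factorial = (q * n + 1) * (q * n).factorial := Nat.factorial_succ _
    rw [e1, e2]
    have f1 : (0 : ℚ) < (q * n : ℚ) + 1 := by positivity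
    have f2 : (0 : ℚ) < ((q + 1) * n : ℕ) + 1 := by positivity
    have g1 : ((((q + 1) * n).factorial : ℕ) : ℚ) ≠ 0 := by exact_mod_cast (Nat.factorial_pos _).ne'
    have g2 : (((q * n).factorial : ℕ) : ℚ) ≠ 0 := by exact_mod_cast (Nat.factorial_pos _).ne'
    have g3 : ((n.factorial : ℕ) : ℚ) ≠ 0 := by exact_mod_cast (Nat.factorial_pos _).ne'
    push_cast
    field_simp
    try exact Or.inl trivial
    try tauto

theorem genCatalan_recurrence (q n : ℕ) (hn : 1 ≤ n) :
    genCatalan q n =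
      ∑ f ∈ Finset.Nat.antidiagonalTuple (q + 1) (n - 1), ∏ i, genCatalan q (f i) := by
  obtain ⟨m, rfl⟩ : ∃ m, n = m + 1 := ⟨n - 1, by omega⟩
  simp only [Nat.add_sub_cancel]
  have hrhs : ∑ f ∈ Finset.Nat.antidiagonalTuple (q + 1) m, ∏ i, genCatalan q (f i)
      = fcD (q + 1) (q + 1) m := by
    rw [← fcD_tuple (q + 1) (by omega) (q + 1) m]
    refine Finset.sum_congr rfl fun f _ => Finset.prod_congr rfl fun i _ => ?_
    exact genCatalan_eq_fcD q (f i)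
  rw [hrhs, genCatalan_eq_fcD]
  have := fcD_rec (q + 1) 0 m (by omega)
  rcases Nat.eq_zero_or_pos m with hm | hm
  · subst hm
    simpa [fcD_zero_left (q + 1) 1, fcD_zero] using this
  · rw [fcD_zero_left (q + 1) (m + 1) (by omega)] at this
    simpa using this
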